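/- Let (A_α) be a direct system of differential A-algebras with structure maps ν_α : A → A_α, and suppose each contraction map ν_α* : Spec^Δ A_α → Spec^Δ A is a homeomorphism. Then the contraction map ν* : Spec^Δ(colim A_α) → Spec^Δ A induced by the limit homomorphism ν : A → colim A_α is a homeomorphism. -/

import Mathlib

/-- An ideal is a differential ideal w.r.t. a family of derivation maps `d`. -/
def IsDiffIdeal {A : Type*} [CommRing A] {k : ℕ} (d : Fin k → A → A) (I : Ideal A) : Prop :=
  ∀ i : Fin k, ∀ x ∈ I, d i x ∈ I

/-- The differential spectrum: prime differential ideals, with the Kolchin topology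
(the subspace topology induced from the Zariski topology on `PrimeSpectrum`). -/
abbrev DiffSpec {A : Type*} [CommRing A] {k : ℕ} (d : Fin k → A → A) :=
  {p : PrimeSpectrum A // IsDiffIdeal d p.asIdeal}

/-- A Keigher ring: the radical of every differential ideal is differential. -/
def IsKeigher {A : Type*} [CommRing A] {k : ℕ} (d : Fin k → A → A) : Prop :=
  ∀ I : Ideal A, IsDiffIdeal d I → IsDiffIdeal d I.radical

/-- `radDiffGen d E` is the smallest radical differential ideal containing `E`. -/
def radDiffGen {A : Type*} [CommRing A] {k : ℕ} (d : Fin k → A → A) (E : Set A) : Ideal A :=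
  sInf {I : Ideal A | E ⊆ I ∧ I.IsRadical ∧ IsDiffIdeal d I}

theorem myZeroExact {ι : Type*} [Preorder ι] [IsDirected ι (· ≤ ·)]
    (G : ι → Type*) [∀ i, CommRing (G i)]
    (f : ∀ i j, i ≤ j → G i → G j) [DirectedSystem G fun i j h => f i j h]
    (f' : ∀ i j, i ≤ j → G i →+* G j) (hfe : ∀ i j h, ⇑(f' i j h) = f i j h)
    {i : ι} {x : G i} (hix : Ring.DirectLimit.of G f i x = 0) :
    ∃ j, ∃ hij : i ≤ j, f i j hij x = 0 := by
  have hf : f = fun i j h => ⇑(f' i j h) := by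
    funext i j h; exact (hfe i j h).symm
  subst hf
  exact Ring.DirectLimit.of.zero_exact hix

theorem diffSpecExt {A : Type*} [CommRing A] {k : ℕ} {d : Fin k → A → A}
    {p q : DiffSpec d} (h : p.1.asIdeal = q.1.asIdeal) : p = q :=
  Subtype.ext (PrimeSpectrum.ext h)

/-- For a direct system of differential `A`-algebras whose contraction maps on differential
spectra are all homeomorphisms, the contraction map of the direct limit is a homeomorphism. -/
theorem stmt8 {A : Type*} [CommRing A] {k : ℕ}
    {ι : Type*} [Preorder ι] [IsDirected ι (· ≤ ·)] [Nonempty ι]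
    (G : ι → Type*) [∀ α, CommRing (G α)]
    (f : ∀ α β, α ≤ β → G α → G β) [DirectedSystem G fun α β h => f α β h]
    (hfhom : ∀ α β h, ∃ r : G α →+* G β, ⇑r = f α β h)
    (δ : Fin k → Derivation ℤ A A)
    (hcomm : ∀ i j a, δ i (δ j a) = δ j (δ i a))
    (δG : ∀ α, Fin k → Derivation ℤ (G α) (G α))
    (ν : ∀ α, A →+* G α)
    (hνcompat : ∀ α β h a, f α β h (ν α a) = ν β a)
    (hνdiff : ∀ α i a, ν α (δ i a) = δG α i (ν α a))
    (hfdiff : ∀ α β h i x, f α β h (δG α i x) = δG β i (f α β h x))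
    (δ' : Fin k → Derivation ℤ (Ring.DirectLimit G f) (Ring.DirectLimit G f))
    (hδ' : ∀ α i x, δ' i (Ring.DirectLimit.of G f α x) = Ring.DirectLimit.of G f α (δG α i x))
    (hα : ∀ α, ∃ h : DiffSpec (fun i => ⇑(δG α i)) ≃ₜ DiffSpec (fun i => ⇑(δ i)),
      ∀ q, (h q).1.asIdeal = Ideal.comap (ν α) q.1.asIdeal)
    (νlim : A →+* Ring.DirectLimit G f)
    (hνlim : ∀ α a, νlim a = Ring.DirectLimit.of G f α (ν α a)) :
    ∃ h : DiffSpec (fun i => ⇑(δ' i)) ≃ₜ DiffSpec (fun i => ⇑(δ i)),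
      ∀ q, (h q).1.asIdeal = Ideal.comap νlim q.1.asIdeal := by
  classical
  set rf : ∀ α β, α ≤ β → G α →+* G β := fun α β h => (hfhom α β h).choose with hrfdef
  have hrf : ∀ α β h, ⇑(rf α β h) = f α β h := fun α β h => (hfhom α β h).choose_spec
  set of : ∀ α, G α →+* Ring.DirectLimit G f := fun α => Ring.DirectLimit.of G f α with hofdef
  -- equality in the direct limit
  have of_eq : ∀ {i j : ι} {x : G i} {y : G j}, of i x = of j y →
      ∃ (l : ι) (hil : i ≤ l) (hjl : j ≤ l), f i l hil x = f j l hjl y := by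
    intro i j x y hxy
    obtain ⟨m, him, hjm⟩ := directed_of (· ≤ ·) i j
    have h0 : of m (rf i m him x - rf j m hjm y) = 0 := by
      rw [map_sub, hrf, hrf, hofdef]
      show Ring.DirectLimit.of G f m (f i m him x) - Ring.DirectLimit.of G f m (f j m hjm y) = 0
      rw [Ring.DirectLimit.of_f, Ring.DirectLimit.of_f]
      exact sub_eq_zero.mpr hxy
    obtain ⟨l, hml, hl⟩ := myZeroExact G f rf hrf h0
    rw [← hrf] at hl
    rw [map_sub, sub_eq_zero] at hl
    refine ⟨l, him.trans hml, hjm.trans hml, ?_⟩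
    have h1 : rf m l hml (rf i m him x) = f i l (him.trans hml) x := by
      rw [hrf, hrf]
      exact DirectedSystem.map_map (f := fun i j h => f i j h) him hml x
    have h2 : rf m l hml (rf j m hjm y) = f j l (hjm.trans hml) y := by
      rw [hrf, hrf]
      exact DirectedSystem.map_map (f := fun i j h => f i j h) hjm hml y
    rw [← h1, ← h2, hl]
  -- the homeomorphisms for each α
  set Hα : ∀ α, DiffSpec (fun i => ⇑(δG α i)) ≃ₜ DiffSpec (fun i => ⇑(δ i)) :=
    fun α => (hα α).choose with hHαdef
  have hHα : ∀ α q, ((Hα α) q).1.asIdeal = Ideal.comap (ν α) q.1.asIdeal :=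
    fun α => (hα α).choose_spec
  -- family of fibers over p
  set Q : DiffSpec (fun i => ⇑(δ i)) → ∀ α, DiffSpec (fun i => ⇑(δG α i)) :=
    fun p α => (Hα α).symm p with hQdef
  have hQν : ∀ p α, Ideal.comap (ν α) (Q p α).1.asIdeal = p.1.asIdeal := by
    intro p α
    have := hHα α ((Hα α).symm p)
    rw [Homeomorph.apply_symm_apply] at this
    exact this.symm
  -- compatibility
  have hQcompat : ∀ p α β (h : α ≤ β) (x : G α),
      f α β h x ∈ (Q p β).1.asIdeal ↔ x ∈ (Q p α).1.asIdeal := by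
    intro p α β h x
    haveI : (Q p β).1.asIdeal.IsPrime := (Q p β).1.isPrime
    set q' : DiffSpec (fun i => ⇑(δG α i)) :=
      ⟨⟨Ideal.comap (rf α β h) (Q p β).1.asIdeal, Ideal.IsPrime.comap _⟩, by
        intro i x hx
        simp only [Ideal.mem_comap] at hx ⊢
        have : (rf α β h) (δG α i x) = δG β i (rf α β h x) := by
          rw [hrf]; exact hfdiff α β h i x
        rw [this]
        exact (Q p β).2 i _ hx⟩ with hq'def
    have hcon : Ideal.comap (ν α) q'.1.asIdeal = p.1.asIdeal := by
      ext a
      simp only [hq'def, Ideal.mem_comap]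
      rw [hrf, hνcompat α β h a, ← Ideal.mem_comap, hQν p β]
    have : q' = Q p α := by
      apply (Hα α).injective
      apply diffSpecExt
      rw [hHα, hHα, hcon, hQν]
    rw [← this]
    simp only [hq'def, Ideal.mem_comap, hrf]
  -- the ideal B p
  have mem_B : ∀ (p : DiffSpec (fun i => ⇑(δ i))) (α) (z : G α),
      (∃ β y, of β y = of α z ∧ y ∈ (Q p β).1.asIdeal) ↔ z ∈ (Q p α).1.asIdeal := by
    intro p α z
    constructor
    · rintro ⟨β, y, hxy, hy⟩
      obtain ⟨l, hβl, hαl, hfl⟩ := of_eq hxy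
      have : f β l hβl y ∈ (Q p l).1.asIdeal := (hQcompat p β l hβl y).mpr hy
      rw [hfl] at this
      exact (hQcompat p α l hαl z).mp this
    · intro hz
      exact ⟨α, z, rfl, hz⟩
  set α0 : ι := Classical.arbitrary ι with hα0def
  set B : DiffSpec (fun i => ⇑(δ i)) → Ideal (Ring.DirectLimit G f) := fun p =>
    { carrier := {x | ∃ β y, of β y = x ∧ y ∈ (Q p β).1.asIdeal}
      zero_mem' := ⟨α0, 0, map_zero _, Ideal.zero_mem _⟩
      add_mem' := by
        rintro a b ⟨β, y, rfl, hy⟩ ⟨γ, z, rfl, hz⟩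
        obtain ⟨l, hβl, hγl⟩ := directed_of (· ≤ ·) β γ
        refine ⟨l, f β l hβl y + f γ l hγl z, ?_, ?_⟩
        · rw [map_add, hofdef]
          show Ring.DirectLimit.of G f l (f β l hβl y) + Ring.DirectLimit.of G f l (f γ l hγl z)
            = _
          rw [Ring.DirectLimit.of_f, Ring.DirectLimit.of_f]
        · exact Ideal.add_mem _ ((hQcompat p β l hβl y).mpr hy) ((hQcompat p γ l hγl z).mpr hz)
      smul_mem' := by
        rintro c x ⟨β, y, rfl, hy⟩
        obtain ⟨γ, z, rfl⟩ := Ring.DirectLimit.exists_of c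
        obtain ⟨l, hβl, hγl⟩ := directed_of (· ≤ ·) β γ
        refine ⟨l, f γ l hγl z * f β l hβl y, ?_, ?_⟩
        · rw [map_mul, hofdef]
          show Ring.DirectLimit.of G f l (f γ l hγl z) * Ring.DirectLimit.of G f l (f β l hβl y)
            = _
          rw [Ring.DirectLimit.of_f, Ring.DirectLimit.of_f]
          rfl
        · exact Ideal.mul_mem_left _ _ ((hQcompat p β l hβl y).mpr hy) } with hBdef
  have mem_B' : ∀ (p) (α) (z : G α), of α z ∈ B p ↔ z ∈ (Q p α).1.asIdeal := by
    intro p α z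
    exact mem_B p α z
  have Bprime : ∀ p, (B p).IsPrime := by
    intro p
    constructor
    · intro htop
      have h1 : (1 : Ring.DirectLimit G f) ∈ B p := htop ▸ Submodule.mem_top
      rw [show (1 : Ring.DirectLimit G f) = of α0 1 from (map_one _).symm] at h1
      rw [mem_B'] at h1
      exact (Q p α0).1.isPrime.ne_top (Ideal.eq_top_of_isUnit_mem _ h1 isUnit_one)
    · intro x y hxy
      obtain ⟨β, a, rfl⟩ := Ring.DirectLimit.exists_of x
      obtain ⟨γ, b, rfl⟩ := Ring.DirectLimit.exists_of y
      obtain ⟨l, hβl, hγl⟩ := directed_of (· ≤ ·) β γ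
      have hmul : Ring.DirectLimit.of G f β a * Ring.DirectLimit.of G f γ b
          = of l (f β l hβl a * f γ l hγl b) := by
        rw [map_mul, hofdef]
        show _ = Ring.DirectLimit.of G f l (f β l hβl a) * Ring.DirectLimit.of G f l (f γ l hγl b)
        rw [Ring.DirectLimit.of_f, Ring.DirectLimit.of_f]
      rw [hmul, mem_B'] at hxy
      rcases (Q p l).1.isPrime.mem_or_mem hxy with h | h
      · left
        have : of β a = of l (f β l hβl a) := (Ring.DirectLimit.of_f hβl a).symm
        show of β a ∈ B p
        rw [this, mem_B']
        exact h
      · right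
        have : of γ b = of l (f γ l hγl b) := (Ring.DirectLimit.of_f hγl b).symm
        show of γ b ∈ B p
        rw [this, mem_B']
        exact h
  have Bdiff : ∀ p, IsDiffIdeal (fun i => ⇑(δ' i)) (B p) := by
    rintro p i x ⟨β, y, rfl, hy⟩
    refine ⟨β, δG β i y, (hδ' β i y).symm, (Q p β).2 i y hy⟩
  -- forward map
  set F : DiffSpec (fun i => ⇑(δ' i)) → DiffSpec (fun i => ⇑(δ i)) := fun q =>
    ⟨⟨Ideal.comap νlim q.1.asIdeal, by haveI := q.1.isPrime; exact Ideal.IsPrime.comap _⟩, by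
      intro i a ha
      simp only [Ideal.mem_comap] at ha ⊢
      have : νlim (δ i a) = δ' i (νlim a) := by
        rw [hνlim α0, hνlim α0, hνdiff, hδ']
      rw [this]
      exact q.2 i _ ha⟩ with hFdef
  -- backward map
  set Ginv : DiffSpec (fun i => ⇑(δ i)) → DiffSpec (fun i => ⇑(δ' i)) := fun p =>
    ⟨⟨B p, Bprime p⟩, Bdiff p⟩ with hGdef
  have left_inv : ∀ q, Ginv (F q) = q := by
    intro q
    apply diffSpecExt
    show B (F q) = q.1.asIdeal
    haveI : q.1.asIdeal.IsPrime := q.1.isPrime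
    set qα : ∀ α, DiffSpec (fun i => ⇑(δG α i)) := fun α =>
      ⟨⟨Ideal.comap (of α) q.1.asIdeal, Ideal.IsPrime.comap _⟩, by
        intro i y hy
        simp only [Ideal.mem_comap] at hy ⊢
        rw [hofdef]
        show Ring.DirectLimit.of G f α (δG α i y) ∈ _
        rw [← hδ']
        exact q.2 i _ hy⟩ with hqαdef
    have hq : ∀ α, Q (F q) α = qα α := by
      intro α
      apply (Hα α).injective
      apply diffSpecExt
      rw [hHα, hHα, hQν]
      show (F q).1.asIdeal = Ideal.comap (ν α) (Ideal.comap (of α) q.1.asIdeal)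
      ext a
      simp only [hFdef, Ideal.mem_comap]
      rw [hνlim α a]
    ext x
    constructor
    · rintro ⟨β, y, rfl, hy⟩
      rw [hq β] at hy
      exact hy
    · intro hx
      obtain ⟨β, y, rfl⟩ := Ring.DirectLimit.exists_of x
      refine ⟨β, y, rfl, ?_⟩
      rw [hq β]
      exact hx
  have right_inv : ∀ p, F (Ginv p) = p := by
    intro p
    apply diffSpecExt
    show Ideal.comap νlim (B p) = p.1.asIdeal
    ext a
    rw [Ideal.mem_comap, hνlim α0 a, show Ring.DirectLimit.of G f α0 (ν α0 a) = of α0 (ν α0 a)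
      from rfl, mem_B', ← Ideal.mem_comap, hQν]
  -- continuity of F
  have contF : Continuous F := by
    apply Continuous.subtype_mk
    have heq : (fun q : DiffSpec (fun i => ⇑(δ' i)) => (F q).1)
        = fun q => PrimeSpectrum.comap νlim q.1 := by
      funext q
      apply PrimeSpectrum.ext
      rw [PrimeSpectrum.comap_asIdeal]
    rw [heq]
    exact (PrimeSpectrum.continuous_comap νlim).comp continuous_subtype_val
  -- continuity of Ginv
  have contG : Continuous Ginv := by
    rw [continuous_iff_isClosed]
    intro s hs
    obtain ⟨t, ht, rfl⟩ := isClosed_induced_iff.mp hs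
    obtain ⟨E, rfl⟩ := (PrimeSpectrum.isClosed_iff_zeroLocus t).mp ht
    have heq : Ginv ⁻¹' (Subtype.val ⁻¹' PrimeSpectrum.zeroLocus E)
        = ⋂ x ∈ E, {p : DiffSpec (fun i => ⇑(δ i)) | x ∈ B p} := by
      ext p
      simp only [Set.mem_preimage, PrimeSpectrum.mem_zeroLocus, Set.mem_iInter, Set.mem_setOf_eq,
        Set.subset_def, SetLike.mem_coe]
      exact Iff.rfl
    rw [heq]
    refine isClosed_biInter fun x hx => ?_
    obtain ⟨β, y, rfl⟩ := Ring.DirectLimit.exists_of x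
    have heq2 : {p : DiffSpec (fun i => ⇑(δ i)) | Ring.DirectLimit.of G f β y ∈ B p}
        = (Hα β).symm ⁻¹' (Subtype.val ⁻¹' PrimeSpectrum.zeroLocus {y}) := by
      ext p
      simp only [Set.mem_setOf_eq, Set.mem_preimage, PrimeSpectrum.mem_zeroLocus,
        Set.singleton_subset_iff, SetLike.mem_coe]
      exact mem_B' p β y
    rw [heq2]
    exact (((PrimeSpectrum.isClosed_zeroLocus {y}).preimage
      continuous_subtype_val).preimage (Hα β).symm.continuous)
  exact ⟨⟨⟨F, Ginv, left_inv, right_inv⟩, contF, contG⟩, fun q => rfl⟩
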